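/- Let d₁≥2, ĉ₁>0, and let T₁∈C¹[½,1] satisfy T₁'≤0 on [½,1] and T₁'(t)<0 for t∈(½,1). Suppose l:[½,1]→[0,∞) is C¹, satisfies l'(t) = √(ĉ₁/d₁)·√(ĉ₁T₁(t) + (d₁−1)l(t)² − (d₁−1)) on [½,1] with the quantity under the square root nonnegative, l(½)=0, l not identically zero, and suppose there exists t*∈(½,1) with ĉ₁T₁(t*) + (d₁−1)l(t*)² − (d₁−1) = 0. Then a contradiction follows; i.e., no such interior zero t* of the expression under the square root can exist. -/

import Mathlib

open Set

/-- No interior degeneration: if l solves l' = √(chat₁/d₁)·√(chat₁T₁ + (d₁−1)l² − (d₁−1))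
with l(½) = 0, l ≥ 0 not identically zero, and T₁' < 0 on (½,1), then there is no
t* ∈ (½,1) at which the quantity under the square root vanishes. -/
theorem stmt7 (d₁ : ℕ) (hd₁ : 2 ≤ d₁) (chat₁ : ℝ) (hchat₁ : 0 < chat₁)
    (T₁ T₁' l : ℝ → ℝ)
    (hT₁deriv : ∀ t ∈ Icc (1/2:ℝ) 1, HasDerivWithinAt T₁ (T₁' t) (Icc (1/2) 1) t)
    (hT₁'cont : ContinuousOn T₁' (Icc (1/2) 1))
    (hT₁'nonpos : ∀ t ∈ Icc (1/2:ℝ) 1, T₁' t ≤ 0)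
    (hT₁'neg : ∀ t ∈ Ioo (1/2:ℝ) 1, T₁' t < 0)
    (hlnonneg : ∀ t ∈ Icc (1/2:ℝ) 1, 0 ≤ l t)
    (hsqrtnonneg : ∀ t ∈ Icc (1/2:ℝ) 1,
      0 ≤ chat₁ * T₁ t + ((d₁:ℝ) - 1) * (l t) ^ 2 - ((d₁:ℝ) - 1))
    (hlderiv : ∀ t ∈ Icc (1/2:ℝ) 1, HasDerivWithinAt l
      (Real.sqrt (chat₁ / d₁) *
        Real.sqrt (chat₁ * T₁ t + ((d₁:ℝ) - 1) * (l t) ^ 2 - ((d₁:ℝ) - 1)))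
      (Icc (1/2) 1) t)
    (hl0 : l (1/2) = 0)
    (hlnotzero : ¬ ∀ t ∈ Icc (1/2:ℝ) 1, l t = 0)
    (t' : ℝ) (ht' : t' ∈ Ioo (1/2:ℝ) 1)
    (hzero : chat₁ * T₁ t' + ((d₁:ℝ) - 1) * (l t') ^ 2 - ((d₁:ℝ) - 1) = 0) :
    False := by
  obtain ⟨ht1, ht2⟩ := ht'
  have hmem : Icc (1/2:ℝ) 1 ∈ nhds t' := by
    apply Icc_mem_nhds <;> linarith
  have ht'Icc : t' ∈ Icc (1/2:ℝ) 1 := ⟨le_of_lt ht1, le_of_lt ht2⟩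
  have hTd : HasDerivAt T₁ (T₁' t') t' := (hT₁deriv t' ht'Icc).hasDerivAt hmem
  have hld : HasDerivAt l 0 t' := by
    have := (hlderiv t' ht'Icc).hasDerivAt hmem
    rwa [hzero, Real.sqrt_zero, mul_zero] at this
  set F : ℝ → ℝ := fun t => chat₁ * T₁ t + ((d₁:ℝ) - 1) * (l t) ^ 2 - ((d₁:ℝ) - 1)
    with hF
  have hFd : HasDerivAt F (chat₁ * T₁' t') t' := by
    have h1 : HasDerivAt (fun t => chat₁ * T₁ t) (chat₁ * T₁' t') t' :=
      hTd.const_mul chat₁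
    have h2 : HasDerivAt (fun t => ((d₁:ℝ)-1) * (l t)^2)
        (((d₁:ℝ)-1) * (2 * l t' ^ 1 * 0)) t' := (hld.pow 2).const_mul _
    have := (h1.add h2).sub_const ((d₁:ℝ)-1)
    exact this.congr_deriv (by ring)
  have hmin : IsLocalMin F t' := by
    filter_upwards [hmem] with t ht
    have h1 := hsqrtnonneg t ht
    have h0 : F t' = 0 := hzero
    rw [h0]
    exact h1
  have h := hmin.hasDerivAt_eq_zero hFd
  have hneg := hT₁'neg t' ⟨ht1, ht2⟩
  nlinarith
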